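/- For an L♮-convex function g : ℤⁿ → ℝ ∪ {+∞} and any positive integer s, the scaled function g̃(p) = g(s·p) is L♮-convex. -/

import Mathlib

/-- The set of multimodular directions
`F = {-e₁, e₁-e₂, e₂-e₃, …, e_{n-1}-eₙ, eₙ}` (1-indexed unit vectors). -/
def mmDir (n : ℕ) : Set (Fin n → ℤ) :=
  {d | ∃ k ≤ n, d = fun j : Fin n =>
    (if (j : ℕ) + 1 = k then 1 else 0) - (if (j : ℕ) + 1 = k + 1 then 1 else 0)}

/-- `f : ℤⁿ → ℝ ∪ {+∞}` is multimodular. -/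
def Multimodular {n : ℕ} (f : (Fin n → ℤ) → WithTop ℝ) : Prop :=
  ∀ z : Fin n → ℤ, f z ≠ ⊤ →
    ∀ d ∈ mmDir n, ∀ d' ∈ mmDir n, d ≠ d' →
      f z + f (z + d + d') ≤ f (z + d) + f (z + d')

/-- Submodularity on `ℤᵐ`. -/
def Submodular {m : ℕ} (h : (Fin m → ℤ) → WithTop ℝ) : Prop :=
  ∀ x y : Fin m → ℤ, h (x ⊔ y) + h (x ⊓ y) ≤ h x + h y

/-- L♮-convexity via discrete midpoint convexity. -/
def LnatConvex {n : ℕ} (g : (Fin n → ℤ) → WithTop ℝ) : Prop :=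
  ∀ p q : Fin n → ℤ,
    g (fun j => Int.fdiv (p j + q j + 1) 2) + g (fun j => Int.fdiv (p j + q j) 2)
      ≤ g p + g q

namespace LnatScalingAux


lemma fdiv2 (a : ℤ) : Int.fdiv a 2 = a / 2 := Int.fdiv_eq_ediv_of_nonneg _ (by norm_num)

lemma wt_cancel {a b c : WithTop ℝ} (hc : c ≠ ⊤) (h : a + c ≤ b + c) : a ≤ b :=
  (WithTop.add_le_add_iff_right hc).mp h

variable {n : ℕ} {g : (Fin n → ℤ) → WithTop ℝ}

lemma submod_aux (hg : LnatConvex g) :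
    ∀ D : ℕ, ∀ x y : Fin n → ℤ, (∀ i, (x i - y i).natAbs ≤ D) →
      g (x ⊔ y) + g (x ⊓ y) ≤ g x + g y := by
  intro D
  induction D using Nat.strong_induction_on with
  | _ D IH =>
  intro x y hD
  by_cases htop : g x + g y = ⊤
  · exact htop ▸ le_top
  by_cases hD1 : D ≤ 1
  · have e1 : (fun j => Int.fdiv (x j + y j + 1) 2) = x ⊔ y := by
      funext i
      have hi := hD i
      simp only [fdiv2, Pi.sup_apply]
      omega
    have e2 : (fun j => Int.fdiv (x j + y j) 2) = x ⊓ y := by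
      funext i
      have hi := hD i
      simp only [fdiv2, Pi.inf_apply]
      omega
    have h := hg x y
    rw [e1, e2] at h
    exact h
  · push_neg at hD1
    set mu : Fin n → ℤ := fun j => Int.fdiv (x j + y j + 1) 2 with hmu
    set md : Fin n → ℤ := fun j => Int.fdiv (x j + y j) 2 with hmd
    set m1 : Fin n → ℤ := fun i => if y i ≤ x i then mu i else md i with hm1
    set m2 : Fin n → ℤ := fun i => if y i ≤ x i then md i else mu i with hm2
    have h6 : g mu + g md ≤ g x + g y := hg x y
    -- bounds
    have hb1 : ∀ i, (x i - md i).natAbs ≤ D - 1 := by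
      intro i; have hi := hD i; simp only [hmd, fdiv2]; omega
    have hb2 : ∀ i, (y i - mu i).natAbs ≤ D - 1 := by
      intro i; have hi := hD i; simp only [hmu, fdiv2]; omega
    have hb3 : ∀ i, ((x ⊔ md) i - (y ⊔ mu) i).natAbs ≤ D - 1 := by
      intro i; have hi := hD i
      simp only [Pi.sup_apply, hmd, hmu, fdiv2]; omega
    have hb4 : ∀ i, ((x ⊓ md) i - (y ⊓ mu) i).natAbs ≤ D - 1 := by
      intro i; have hi := hD i
      simp only [Pi.inf_apply, hmd, hmu, fdiv2]; omega
    have h1 := IH (D-1) (by omega) x md hb1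
    have h2 := IH (D-1) (by omega) y mu hb2
    have h3 := IH (D-1) (by omega) (x ⊔ md) (y ⊔ mu) hb3
    have h4 := IH (D-1) (by omega) (x ⊓ md) (y ⊓ mu) hb4
    -- identities
    have e3a : (x ⊔ md) ⊔ (y ⊔ mu) = x ⊔ y := by
      funext i; have hi := hD i
      simp only [Pi.sup_apply, hmd, hmu, fdiv2]; omega
    have e3b : (x ⊔ md) ⊓ (y ⊔ mu) = m1 := by
      funext i; have hi := hD i
      simp only [Pi.sup_apply, Pi.inf_apply, hm1, hmd, hmu, fdiv2]
      split_ifs <;> omega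
    have e4a : (x ⊓ md) ⊔ (y ⊓ mu) = m2 := by
      funext i; have hi := hD i
      simp only [Pi.sup_apply, Pi.inf_apply, hm2, hmd, hmu, fdiv2]
      split_ifs <;> omega
    have e4b : (x ⊓ md) ⊓ (y ⊓ mu) = x ⊓ y := by
      funext i; have hi := hD i
      simp only [Pi.inf_apply, hmd, hmu, fdiv2]; omega
    have e5a : (fun j => Int.fdiv (m1 j + m2 j + 1) 2) = mu := by
      funext i; have hi := hD i
      simp only [hm1, hm2, hmu, hmd, fdiv2]
      split_ifs <;> omega
    have e5b : (fun j => Int.fdiv (m1 j + m2 j) 2) = md := by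
      funext i; have hi := hD i
      simp only [hm1, hm2, hmu, hmd, fdiv2]
      split_ifs <;> omega
    have h5 : g mu + g md ≤ g m1 + g m2 := by
      have := hg m1 m2; rw [e5a, e5b] at this; exact this
    rw [e3a, e3b] at h3
    rw [e4a, e4b] at h4
    -- finiteness
    have hx : g x ≠ ⊤ := (WithTop.add_ne_top.mp htop).1
    have hy : g y ≠ ⊤ := (WithTop.add_ne_top.mp htop).2
    have hmd' : g md ≠ ⊤ := (WithTop.add_ne_top.mp (ne_top_of_le_ne_top htop h6)).2
    have hmu' : g mu ≠ ⊤ := (WithTop.add_ne_top.mp (ne_top_of_le_ne_top htop h6)).1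
    have h1fin : g (x ⊔ md) + g (x ⊓ md) ≠ ⊤ :=
      ne_top_of_le_ne_top (WithTop.add_ne_top.mpr ⟨hx, hmd'⟩) h1
    have h2fin : g (y ⊔ mu) + g (y ⊓ mu) ≠ ⊤ :=
      ne_top_of_le_ne_top (WithTop.add_ne_top.mpr ⟨hy, hmu'⟩) h2
    have h34fin : g (x ⊔ md) ≠ ⊤ ∧ g (x ⊓ md) ≠ ⊤ := WithTop.add_ne_top.mp h1fin
    have h34fin' : g (y ⊔ mu) ≠ ⊤ ∧ g (y ⊓ mu) ≠ ⊤ := WithTop.add_ne_top.mp h2fin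
    have hm1' : g m1 ≠ ⊤ := by
      have := ne_top_of_le_ne_top (WithTop.add_ne_top.mpr ⟨h34fin.1, h34fin'.1⟩) h3
      exact (WithTop.add_ne_top.mp this).2
    have hm2' : g m2 ≠ ⊤ := by
      have := ne_top_of_le_ne_top (WithTop.add_ne_top.mpr ⟨h34fin.2, h34fin'.2⟩) h4
      exact (WithTop.add_ne_top.mp this).1
    -- combine
    apply wt_cancel (WithTop.add_ne_top.mpr ⟨hm1', hm2'⟩)
    calc g (x ⊔ y) + g (x ⊓ y) + (g m1 + g m2)
        = (g (x ⊔ y) + g m1) + (g m2 + g (x ⊓ y)) := by abel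
      _ ≤ (g (x ⊔ md) + g (y ⊔ mu)) + (g (x ⊓ md) + g (y ⊓ mu)) := add_le_add h3 h4
      _ = (g (x ⊔ md) + g (x ⊓ md)) + (g (y ⊔ mu) + g (y ⊓ mu)) := by abel
      _ ≤ (g x + g md) + (g y + g mu) := add_le_add h1 h2
      _ = (g x + g y) + (g mu + g md) := by abel
      _ ≤ (g x + g y) + (g m1 + g m2) := add_le_add (le_refl _) h5


lemma sl_aux (hg : LnatConvex g) (x y : Fin n → ℤ) (h2 : ∀ i, (x i - y i).natAbs ≤ 2) :
    g (fun i => max (x i - 1) (y i)) + g (fun i => min (x i) (y i + 1)) ≤ g x + g y := by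
  by_cases htop : g x + g y = ⊤
  · exact htop ▸ le_top
  set P : Fin n → ℤ := fun i => max (x i - 1) (y i) with hP
  set Q : Fin n → ℤ := fun i => min (x i) (y i + 1) with hQ
  set y0 : Fin n → ℤ := fun i => min (x i) (y i) with hy0
  set y1 : Fin n → ℤ := fun j => Int.fdiv (y0 j + y j + 1) 2 with hy1
  set t1 : Fin n → ℤ := fun j => Int.fdiv (y0 j + x j) 2 with ht1
  set s2 : Fin n → ℤ := fun j => Int.fdiv (y1 j + t1 j + 1) 2 with hs2
  -- finiteness of y0 via submodularity
  have hsub := submod_aux hg 2 x y h2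
  have hx : g x ≠ ⊤ := (WithTop.add_ne_top.mp htop).1
  have hy : g y ≠ ⊤ := (WithTop.add_ne_top.mp htop).2
  have hy0fin : g y0 ≠ ⊤ := by
    have e : x ⊓ y = y0 := by
      funext i; simp only [Pi.inf_apply, hy0]
    rw [e] at hsub
    exact (WithTop.add_ne_top.mp (ne_top_of_le_ne_top htop hsub)).2
  -- I3 : DMC (y0, y) gives finiteness of y1
  have I3 := hg y0 y
  have hy1fin : g y1 ≠ ⊤ := by
    have := ne_top_of_le_ne_top (WithTop.add_ne_top.mpr ⟨hy0fin, hy⟩) I3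
    exact (WithTop.add_ne_top.mp this).1
  -- I0 : DMC (y0, x) : up = Q, dn = t1
  have I0 := hg y0 x
  have e0 : (fun j => Int.fdiv (y0 j + x j + 1) 2) = Q := by
    funext i; have hi := h2 i
    simp only [hy0, hQ, fdiv2]; omega
  rw [e0] at I0
  have ht1fin : g t1 ≠ ⊤ := by
    have := ne_top_of_le_ne_top (WithTop.add_ne_top.mpr ⟨hy0fin, hx⟩) I0
    exact (WithTop.add_ne_top.mp this).2
  -- I1 : DMC (y1, t1) : up = s2, dn = y0
  have I1 := hg y1 t1
  have e1 : (fun j => Int.fdiv (y1 j + t1 j) 2) = y0 := by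
    funext i; have hi := h2 i
    simp only [hy1, ht1, hy0, fdiv2]; omega
  rw [e1] at I1
  have hs2fin : g s2 ≠ ⊤ := by
    have := ne_top_of_le_ne_top (WithTop.add_ne_top.mpr ⟨hy1fin, ht1fin⟩) I1
    exact (WithTop.add_ne_top.mp this).1
  -- I2 : DMC (y, s2) : up = P, dn = y1
  have I2 := hg y s2
  have e2a : (fun j => Int.fdiv (y j + s2 j + 1) 2) = P := by
    funext i; have hi := h2 i
    simp only [hs2, hy1, ht1, hy0, hP, fdiv2]; omega
  have e2b : (fun j => Int.fdiv (y j + s2 j) 2) = y1 := by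
    funext i; have hi := h2 i
    simp only [hs2, hy1, ht1, hy0, fdiv2]; omega
  rw [e2a, e2b] at I2
  -- combine: cancel K = g y0 + g y1 + g t1 + g s2
  apply wt_cancel (WithTop.add_ne_top.mpr ⟨WithTop.add_ne_top.mpr ⟨hy0fin, hy1fin⟩,
    WithTop.add_ne_top.mpr ⟨ht1fin, hs2fin⟩⟩)
  calc g P + g Q + (g y0 + g y1 + (g t1 + g s2))
      = (g P + g y1) + ((g s2 + g y0) + (g Q + g t1)) := by abel
    _ ≤ (g y + g s2) + ((g y1 + g t1) + (g y0 + g x)) :=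
        add_le_add I2 (add_le_add I1 I0)
    _ = g x + g y + (g y0 + g y1 + (g t1 + g s2)) := by abel


lemma trs_aux (hg : LnatConvex g) :
    ∀ D α : ℕ, ∀ x y : Fin n → ℤ, (∀ i, (x i - y i).natAbs ≤ D) →
      g (fun i => max (x i - (α : ℤ)) (y i)) + g (fun i => min (x i) (y i + (α : ℤ)))
        ≤ g x + g y := by
  intro D
  induction D using Nat.strong_induction_on with
  | _ D IHD =>
  intro α
  induction α using Nat.strong_induction_on with
  | _ α IHα =>
  intro x y hD
  by_cases htop : g x + g y = ⊤
  · exact htop ▸ le_top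
  by_cases hα0 : α = 0
  · subst hα0
    have e1 : (fun i => max (x i - ((0:ℕ) : ℤ)) (y i)) = x ⊔ y := by
      funext i; simp only [Pi.sup_apply]; push_cast; omega
    have e2 : (fun i => min (x i) (y i + ((0:ℕ) : ℤ))) = x ⊓ y := by
      funext i; simp only [Pi.inf_apply]; push_cast; omega
    rw [e1, e2]
    exact submod_aux hg D x y hD
  have hα1 : 1 ≤ α := by omega
  by_cases hD1 : D ≤ 1
  · have e1 : (fun i => max (x i - (α : ℤ)) (y i)) = y := by
      funext i; have hi := hD i
      have : (1:ℤ) ≤ (α:ℤ) := by exact_mod_cast hα1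
      omega
    have e2 : (fun i => min (x i) (y i + (α : ℤ))) = x := by
      funext i; have hi := hD i
      have : (1:ℤ) ≤ (α:ℤ) := by exact_mod_cast hα1
      omega
    rw [e1, e2, add_comm]
  push_neg at hD1
  by_cases hsl : α = 1 ∧ D ≤ 2
  · obtain ⟨hsl1, hsl2⟩ := hsl
    subst hsl1
    have e1 : ((1:ℕ) : ℤ) = (1 : ℤ) := by norm_num
    rw [e1]
    exact sl_aux hg x y (fun i => le_trans (hD i) hsl2)
  -- general step
  set a1 : ℕ := (α + 1) / 2 with ha1
  set a2 : ℕ := α / 2 with ha2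
  have hsum : a1 + a2 = α := by omega
  have hle : a2 ≤ a1 ∧ a1 ≤ a2 + 1 ∧ 1 ≤ a1 := by omega
  set md : Fin n → ℤ := fun j => Int.fdiv (x j + y j) 2 with hmd
  set A : Fin n → ℤ := fun i => max (x i - (a1 : ℤ)) (md i) with hA
  set A' : Fin n → ℤ := fun i => min (x i) (md i + (a1 : ℤ)) with hA'
  set C : Fin n → ℤ := fun i => min (A i) (y i + (a2 : ℤ)) with hC
  -- casts
  have hcast : (a1:ℤ) + (a2:ℤ) = (α:ℤ) := by exact_mod_cast hsum
  have hc1 : (a2:ℤ) ≤ (a1:ℤ) := by exact_mod_cast hle.1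
  have hc2 : (a1:ℤ) ≤ (a2:ℤ) + 1 := by exact_mod_cast hle.2.1
  have hc3 : (1:ℤ) ≤ (a1:ℤ) := by exact_mod_cast hle.2.2
  -- finiteness of md
  have h6 := hg x y
  have hx : g x ≠ ⊤ := (WithTop.add_ne_top.mp htop).1
  have hy : g y ≠ ⊤ := (WithTop.add_ne_top.mp htop).2
  have hmdfin : g md ≠ ⊤ :=
    (WithTop.add_ne_top.mp (ne_top_of_le_ne_top htop h6)).2
  -- Ineq1 : TRS a1 at (x, md), distance ≤ D-1
  have hb1 : ∀ i, (x i - md i).natAbs ≤ D - 1 := by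
    intro i; have hi := hD i; simp only [hmd, fdiv2]; omega
  have Ineq1 : g A + g A' ≤ g x + g md := IHD (D-1) (by omega) a1 x md hb1
  have hAfin : g A ≠ ⊤ := by
    have := ne_top_of_le_ne_top (WithTop.add_ne_top.mpr ⟨hx, hmdfin⟩) Ineq1
    exact (WithTop.add_ne_top.mp this).1
  have hA'fin : g A' ≠ ⊤ := by
    have := ne_top_of_le_ne_top (WithTop.add_ne_top.mpr ⟨hx, hmdfin⟩) Ineq1
    exact (WithTop.add_ne_top.mp this).2
  -- Ineq2 : TRS a2 at (A, y) (a2 < α)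
  have hb2 : ∀ i, (A i - y i).natAbs ≤ D := by
    intro i; have hi := hD i; simp only [hA, hmd, fdiv2]; omega
  have Ineq2' := IHα a2 (by omega) A y hb2
  have eP : (fun i => max (A i - (a2 : ℤ)) (y i))
      = (fun i => max (x i - (α : ℤ)) (y i)) := by
    funext i; have hi := hD i
    simp only [hA, hmd, fdiv2]
    omega
  rw [eP] at Ineq2'
  have hCfin : g C ≠ ⊤ := by
    have := ne_top_of_le_ne_top (WithTop.add_ne_top.mpr ⟨hAfin, hy⟩) Ineq2'
    exact (WithTop.add_ne_top.mp this).2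
  -- Ineq3 : TRS a1 at (A', C)
  have Ineq3' : g (fun i => max (A' i - (a1:ℤ)) (C i))
      + g (fun i => min (A' i) (C i + (a1:ℤ))) ≤ g A' + g C := by
    rcases Nat.lt_or_ge 1 α with hα2 | hα2
    · -- α ≥ 2 : use IHα with a1 < α ; distance ≤ D
      have hb3 : ∀ i, (A' i - C i).natAbs ≤ D := by
        intro i; have hi := hD i
        simp only [hA', hC, hA, hmd, fdiv2]; omega
      exact IHα a1 (by omega) A' C hb3
    · -- α = 1, so D ≥ 3 ; use IHD with distance ≤ D-1
      have hα1' : α = 1 := by omega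
      have hD3 : 3 ≤ D := by
        rcases Nat.lt_or_ge D 3 with h | h
        · exact absurd ⟨hα1', by omega⟩ hsl
        · exact h
      have hb3 : ∀ i, (A' i - C i).natAbs ≤ D - 1 := by
        intro i; have hi := hD i
        simp only [hA', hC, hA, hmd, fdiv2]; omega
      exact IHD (D-1) (by omega) a1 A' C hb3
  have eB : (fun i => max (A' i - (a1:ℤ)) (C i)) = md := by
    funext i; have hi := hD i
    simp only [hA', hC, hA, hmd, fdiv2]; omega
  have eQ : (fun i => min (A' i) (C i + (a1:ℤ)))
      = (fun i => min (x i) (y i + (α : ℤ))) := by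
    funext i; have hi := hD i
    simp only [hA', hC, hA, hmd, fdiv2]; omega
  rw [eB, eQ] at Ineq3'
  -- combine
  apply wt_cancel (c := g A + g A' + (g C + g md))
    (WithTop.add_ne_top.mpr ⟨WithTop.add_ne_top.mpr ⟨hAfin, hA'fin⟩,
      WithTop.add_ne_top.mpr ⟨hCfin, hmdfin⟩⟩)
  calc g (fun i => max (x i - (α : ℤ)) (y i)) + g (fun i => min (x i) (y i + (α : ℤ)))
        + (g A + g A' + (g C + g md))
      = ((g (fun i => max (x i - (α : ℤ)) (y i)) + g C)
          + (g md + g (fun i => min (x i) (y i + (α : ℤ))))) + (g A + g A') := by abel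
    _ ≤ ((g A + g y) + (g A' + g C)) + (g A + g A') :=
        add_le_add (add_le_add Ineq2' Ineq3') (le_refl _)
    _ ≤ ((g A + g y) + (g A' + g C)) + (g x + g md) := add_le_add (le_refl _) Ineq1
    _ = g x + g y + (g A + g A' + (g C + g md)) := by abel


/-- TRS without explicit distance bound. -/
lemma trs (hg : LnatConvex g) (α : ℕ) (x y : Fin n → ℤ) :
    g (fun i => max (x i - (α : ℤ)) (y i)) + g (fun i => min (x i) (y i + (α : ℤ)))
      ≤ g x + g y := by
  apply trs_aux hg (∑ i, (x i - y i).natAbs) α x y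
  intro i
  exact Finset.single_le_sum (f := fun j => (x j - y j).natAbs)
    (fun j _ => Nat.zero_le _) (Finset.mem_univ i)

/-- Per-coordinate facts for one TRS step on an `s`-multiple pair. -/
lemma step_coord (t X Y W : ℤ) (ht : 1 ≤ t) (h : X - Y = t * W) :
    max (X - t) Y - min X (Y + t) = t * (if 1 ≤ W then W - 2 else -W) ∧
    max (X - t) Y + min X (Y + t) = X + Y := by
  split_ifs with hw
  · have key : t * 1 ≤ t * W := mul_le_mul_of_nonneg_left hw (by linarith)
    rw [mul_one] at key
    rw [max_eq_left (by linarith), min_eq_right (by linarith), mul_sub]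
    constructor <;> linarith
  · have hw' : W ≤ 0 := by linarith
    have key : t * W ≤ t * 0 := mul_le_mul_of_nonneg_left hw' (by linarith)
    rw [mul_zero] at key
    rw [max_eq_right (by linarith), min_eq_left (by linarith), mul_neg]
    constructor <;> linarith

/-- Per-coordinate terminal identification. -/
lemma term_coord (t X Y W P : ℤ) (ht : 1 ≤ t) (h1 : X - Y = t * W) (h2 : X + Y = t * P)
    (h3 : (W - P) % 2 = 0) (h4 : (W).natAbs ≤ 1) :
    max X Y = t * ((P + 1) / 2) ∧ min X Y = t * (P / 2) := by
  have hw : W = -1 ∨ W = 0 ∨ W = 1 := by omega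
  rcases hw with hw | hw | hw <;> subst hw
  · obtain ⟨k, hk⟩ : ∃ k, P = 2 * k + 1 := ⟨(P - 1) / 2, by omega⟩
    subst hk
    have e1 : (2 * k + 1 + 1) / 2 = k + 1 := by omega
    have e2 : (2 * k + 1) / 2 = k := by omega
    rw [e1, e2]
    have hr1 : t * (2 * k + 1) = 2 * (t * (k + 1)) - t := by ring
    have hr2 : t * (2 * k + 1) = 2 * (t * k) + t := by ring
    have hX : X = t * k := by linarith
    have hY : Y = t * (k + 1) := by linarith
    rw [max_eq_right (by linarith), min_eq_left (by linarith)]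
    exact ⟨hY, hX⟩
  · obtain ⟨k, hk⟩ : ∃ k, P = 2 * k := ⟨P / 2, by omega⟩
    subst hk
    have e1 : (2 * k + 1) / 2 = k := by omega
    have e2 : (2 * k) / 2 = k := by omega
    rw [e1, e2]
    have hr : t * (2 * k) = 2 * (t * k) := by ring
    have hX : X = t * k := by linarith
    have hY : Y = t * k := by linarith
    rw [max_eq_left (by linarith), min_eq_left (by linarith)]
    exact ⟨hX, hX⟩
  · obtain ⟨k, hk⟩ : ∃ k, P = 2 * k + 1 := ⟨(P - 1) / 2, by omega⟩
    subst hk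
    have e1 : (2 * k + 1 + 1) / 2 = k + 1 := by omega
    have e2 : (2 * k + 1) / 2 = k := by omega
    rw [e1, e2]
    have hr1 : t * (2 * k + 1) = 2 * (t * (k + 1)) - t := by ring
    have hr2 : t * (2 * k + 1) = 2 * (t * k) + t := by ring
    have hX : X = t * (k + 1) := by linarith
    have hY : Y = t * k := by linarith
    rw [max_eq_left (by linarith), min_eq_right (by linarith)]
    exact ⟨hX, hY⟩

lemma chain_aux (hg : LnatConvex g) (s : ℕ) (hs : 0 < s) (p q : Fin n → ℤ) :
    ∀ Φ : ℕ, ∀ x y w : Fin n → ℤ,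
      (∀ i, x i - y i = (s:ℤ) * w i) →
      (∀ i, x i + y i = (s:ℤ) * (p i + q i)) →
      (∀ i, (w i - (p i + q i)) % 2 = 0) →
      (∑ i, ((w i).natAbs - 1) ≤ Φ) →
      g ((s:ℤ) • fun j => Int.fdiv (p j + q j + 1) 2)
        + g ((s:ℤ) • fun j => Int.fdiv (p j + q j) 2) ≤ g x + g y := by
  have hs1 : (1:ℤ) ≤ (s:ℤ) := by exact_mod_cast hs
  intro Φ
  induction Φ using Nat.strong_induction_on with
  | _ Φ IH =>
  intro x y w hxy hsum hpar hmeas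
  by_cases hterm : ∀ i, (w i).natAbs ≤ 1
  · -- terminal case
    have e1 : x ⊔ y = (s:ℤ) • fun j => Int.fdiv (p j + q j + 1) 2 := by
      funext i
      simp only [Pi.sup_apply, Pi.smul_apply, smul_eq_mul, fdiv2]
      exact (term_coord (s:ℤ) (x i) (y i) (w i) (p i + q i) hs1 (hxy i) (hsum i)
        (hpar i) (hterm i)).1
    have e2 : x ⊓ y = (s:ℤ) • fun j => Int.fdiv (p j + q j) 2 := by
      funext i
      simp only [Pi.inf_apply, Pi.smul_apply, smul_eq_mul, fdiv2]
      exact (term_coord (s:ℤ) (x i) (y i) (w i) (p i + q i) hs1 (hxy i) (hsum i)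
        (hpar i) (hterm i)).2
    rw [← e1, ← e2]
    exact submod_aux hg (∑ i, (x i - y i).natAbs) x y
      (fun i => Finset.single_le_sum (f := fun j => (x j - y j).natAbs)
        (fun j _ => Nat.zero_le _) (Finset.mem_univ i))
  · push_neg at hterm
    obtain ⟨i0, hi0⟩ := hterm
    have hΦ1 : 1 ≤ Φ := by
      have : (w i0).natAbs - 1 ≤ ∑ i, ((w i).natAbs - 1) :=
        Finset.single_le_sum (f := fun j => (w j).natAbs - 1)
          (fun j _ => Nat.zero_le _) (Finset.mem_univ i0)
      omega
    rcases le_or_gt 2 (w i0) with hpos | hneg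
    · -- step at (x, y)
      set x' : Fin n → ℤ := fun i => max (x i - (s:ℤ)) (y i) with hx'
      set y' : Fin n → ℤ := fun i => min (x i) (y i + (s:ℤ)) with hy'
      set w' : Fin n → ℤ := fun i => if 1 ≤ w i then w i - 2 else -(w i) with hw'
      have hstep : ∀ i, x' i - y' i = (s:ℤ) * w' i ∧ x' i + y' i = x i + y i := by
        intro i
        simp only [hx', hy', hw']
        exact step_coord (s:ℤ) (x i) (y i) (w i) hs1 (hxy i)
      have htrs := trs hg s x y
      have hxy' : ∀ i, x' i - y' i = (s:ℤ) * w' i := fun i => (hstep i).1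
      have hsum' : ∀ i, x' i + y' i = (s:ℤ) * (p i + q i) := by
        intro i; rw [(hstep i).2]; exact hsum i
      have hpar' : ∀ i, (w' i - (p i + q i)) % 2 = 0 := by
        intro i; have := hpar i
        simp only [hw']; split_ifs <;> omega
      have hmeas' : ∑ i, ((w' i).natAbs - 1) ≤ Φ - 1 := by
        have hlt : ∑ i, ((w' i).natAbs - 1) < ∑ i, ((w i).natAbs - 1) := by
          apply Finset.sum_lt_sum
          · intro i _
            simp only [hw']; split_ifs <;> omega
          · refine ⟨i0, Finset.mem_univ i0, ?_⟩
            simp only [hw']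
            rw [if_pos (by omega)]
            omega
        omega
      calc g ((s:ℤ) • fun j => Int.fdiv (p j + q j + 1) 2)
            + g ((s:ℤ) • fun j => Int.fdiv (p j + q j) 2)
          ≤ g x' + g y' := IH (Φ - 1) (by omega) x' y' w' hxy' hsum' hpar' hmeas'
        _ ≤ g x + g y := htrs
    · -- w i0 ≤ -2 : step at (y, x)
      have hneg2 : w i0 ≤ -2 := by omega
      set x' : Fin n → ℤ := fun i => max (y i - (s:ℤ)) (x i) with hx'
      set y' : Fin n → ℤ := fun i => min (y i) (x i + (s:ℤ)) with hy'
      set w' : Fin n → ℤ := fun i => if 1 ≤ -(w i) then -(w i) - 2 else (w i) with hw'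
      have hstep : ∀ i, x' i - y' i = (s:ℤ) * w' i ∧ x' i + y' i = x i + y i := by
        intro i
        have h' : y i - x i = (s:ℤ) * (-(w i)) := by
          rw [mul_neg, ← hxy i]; ring
        have := step_coord (s:ℤ) (y i) (x i) (-(w i)) hs1 h'
        simp only [hx', hy', hw']
        constructor
        · rw [this.1]
          congr 1
          split_ifs <;> ring
        · rw [this.2]; ring
      have htrs := trs hg s y x
      have hxy' : ∀ i, x' i - y' i = (s:ℤ) * w' i := fun i => (hstep i).1
      have hsum' : ∀ i, x' i + y' i = (s:ℤ) * (p i + q i) := by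
        intro i; rw [(hstep i).2]; exact hsum i
      have hpar' : ∀ i, (w' i - (p i + q i)) % 2 = 0 := by
        intro i; have := hpar i
        simp only [hw']; split_ifs <;> omega
      have hmeas' : ∑ i, ((w' i).natAbs - 1) ≤ Φ - 1 := by
        have hlt : ∑ i, ((w' i).natAbs - 1) < ∑ i, ((w i).natAbs - 1) := by
          apply Finset.sum_lt_sum
          · intro i _
            simp only [hw']; split_ifs <;> omega
          · refine ⟨i0, Finset.mem_univ i0, ?_⟩
            simp only [hw']
            rw [if_pos (by omega)]
            omega
        omega
      calc g ((s:ℤ) • fun j => Int.fdiv (p j + q j + 1) 2)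
            + g ((s:ℤ) • fun j => Int.fdiv (p j + q j) 2)
          ≤ g x' + g y' := IH (Φ - 1) (by omega) x' y' w' hxy' hsum' hpar' hmeas'
        _ ≤ g y + g x := htrs
        _ = g x + g y := add_comm _ _

end LnatScalingAux

theorem lnatConvex_scaling {n : ℕ} (g : (Fin n → ℤ) → WithTop ℝ) (s : ℕ)
    (hs : 0 < s) (hg : LnatConvex g) :
    LnatConvex (fun p : Fin n → ℤ => g ((s : ℤ) • p)) := by
  intro p q
  show g ((s:ℤ) • fun j => Int.fdiv (p j + q j + 1) 2)
      + g ((s:ℤ) • fun j => Int.fdiv (p j + q j) 2)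
    ≤ g ((s:ℤ) • p) + g ((s:ℤ) • q)
  apply LnatScalingAux.chain_aux hg s hs p q (∑ i, ((p i - q i).natAbs - 1))
    ((s:ℤ) • p) ((s:ℤ) • q) (fun i => p i - q i)
  · intro i; simp only [Pi.smul_apply, smul_eq_mul]; ring
  · intro i; simp only [Pi.smul_apply, smul_eq_mul]; ring
  · intro i; omega
  · exact le_refl _
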